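/- Let N ≥ 1, α ∈ (0,1) and p > p_F = 1 + 2/N, and let δ₀ be the Dirac measure at the origin of ℝ^N. Then for every κ > 0 and every T > 0, the time-fractional problem with initial data μ = κδ₀ possesses no nonnegative solution on [0,T]×ℝ^N. -/

import Mathlib

open MeasureTheory Real Set Metric
open scoped ENNReal NNReal

noncomputable section

/-- Euclidean space ℝ^N. -/
abbrev RN (N : ℕ) := EuclideanSpace ℝ (Fin N)

/-- The Gaussian heat kernel `G(t,x) = (4πt)^{-N/2} exp(-|x|²/(4t))` on ℝ^N. -/
def heatKernel (N : ℕ) (t : ℝ) (x : RN N) : ℝ :=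
  (4 * Real.pi * t) ^ (-(N : ℝ) / 2) * Real.exp (-‖x‖ ^ 2 / (4 * t))

/-- `(e^{tΔ}μ)(x) = ∫_{ℝ^N} G(t, x-y) dμ(y)` for a nonnegative measure `μ`. -/
def heatSG (N : ℕ) (t : ℝ) (μ : Measure (RN N)) (x : RN N) : ℝ≥0∞ :=
  ∫⁻ y, ENNReal.ofReal (heatKernel N t (x - y)) ∂μ

/-- `P_α(t)μ(x) = ∫_0^∞ h_α(θ) (e^{t^α θ Δ}μ)(x) dθ`. -/
def Pop (N : ℕ) (α : ℝ) (h : ℝ → ℝ) (t : ℝ) (μ : Measure (RN N)) (x : RN N) : ℝ≥0∞ :=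
  ∫⁻ θ in Ioi (0 : ℝ), ENNReal.ofReal (h θ) * heatSG N (t ^ α * θ) μ x

/-- `S_α(t)f(x) = ∫_0^∞ θ h_α(θ) (e^{t^α θ Δ}f)(x) dθ` for a nonnegative function `f`. -/
def Sop (N : ℕ) (α : ℝ) (h : ℝ → ℝ) (t : ℝ) (f : RN N → ℝ≥0∞) (x : RN N) : ℝ≥0∞ :=
  ∫⁻ θ in Ioi (0 : ℝ), ENNReal.ofReal (θ * h θ) *
    ∫⁻ y, ENNReal.ofReal (heatKernel N (t ^ α * θ) (x - y)) * f y

/-- `h = h_α` is an admissible probability density on `(0,∞)`: it is measurable, positive,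
has the moments `∫_0^∞ θ^δ h(θ) dθ = Γ(1+δ)/Γ(1+αδ)` for `δ > -1`, and its Laplace-type
transforms are the Mittag-Leffler functions `E_{α,1}` and `E_{α,α}` at nonpositive arguments. -/
structure IsAdmissibleDensity (α : ℝ) (h : ℝ → ℝ) : Prop where
  measurable : Measurable h
  pos : ∀ θ ∈ Ioi (0 : ℝ), 0 < h θ
  moment : ∀ δ : ℝ, -1 < δ →
    ∫ θ in Ioi (0 : ℝ), θ ^ δ * h θ = Real.Gamma (1 + δ) / Real.Gamma (1 + α * δ)
  laplace_one : ∀ z : ℝ, z ≤ 0 →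
    ∫ θ in Ioi (0 : ℝ), h θ * Real.exp (z * θ) = ∑' k : ℕ, z ^ k / Real.Gamma (α * k + 1)
  laplace_two : ∀ z : ℝ, z ≤ 0 →
    α * ∫ θ in Ioi (0 : ℝ), θ * h θ * Real.exp (z * θ) = ∑' k : ℕ, z ^ k / Real.Gamma (α * k + α)

/-- `u` is a (nonnegative) solution of `∂_t^α u - Δu = u^p`, `u(0) = μ` on `[0,T] × ℝ^N`:
for a.e. `t ∈ (0,T]` and a.e. `x`, `u(t,x) < ∞` and
`u(t,x) = [P_α(t)μ](x) + α ∫_0^t (t-s)^{α-1} [S_α(t-s) u(s)^p](x) ds`. -/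
def IsSolution (N : ℕ) (α p : ℝ) (h : ℝ → ℝ) (μ : Measure (RN N)) (T : ℝ)
    (u : ℝ → RN N → ℝ≥0∞) : Prop :=
  Measurable (Function.uncurry u) ∧
  ∀ᵐ t ∂(volume.restrict (Ioc (0 : ℝ) T)), ∀ᵐ x ∂(volume : Measure (RN N)),
    u t x < ∞ ∧
    u t x = Pop N α h t μ x +
      ENNReal.ofReal α * ∫⁻ s in Ioo (0 : ℝ) t,
        ENNReal.ofReal ((t - s) ^ (α - 1)) * Sop N α h (t - s) (fun y => u s y ^ p) x

/-- The lifespan `T_α[μ]`: the supremum (in `ℝ≥0∞`) of all `T > 0` such that the problem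
possesses a solution on `[0,T] × ℝ^N`; it is `0` if no such `T` exists. -/
def lifespan (N : ℕ) (α p : ℝ) (h : ℝ → ℝ) (μ : Measure (RN N)) : ℝ≥0∞ :=
  ⨆ (T : ℝ) (_ : 0 < T ∧ ∃ u, IsSolution N α p h μ T u), ENNReal.ofReal T

set_option maxHeartbeats 2000000

lemma measurable_ofReal_heatKernel (N : ℕ) (t : ℝ) (x : RN N) :
    Measurable fun y : RN N => ENNReal.ofReal (heatKernel N t (x - y)) := by
  apply Measurable.ennreal_ofReal
  unfold heatKernel
  fun_prop

lemma heatKernel_ge (N : ℕ) {τ A B : ℝ} (x : RN N) (hτ : 0 < τ)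
    (hA : 4 * π * τ ≤ A) (hB : ‖x‖ ^ 2 / (4 * τ) ≤ B) :
    A ^ (-(N : ℝ) / 2) * Real.exp (-B) ≤ heatKernel N τ x := by
  have h4 : 0 < 4 * π * τ := by positivity
  unfold heatKernel
  apply mul_le_mul
  · exact Real.rpow_le_rpow_of_nonpos h4 hA (by have : (0:ℝ) ≤ (N:ℝ) := Nat.cast_nonneg N; linarith)
  · rw [Real.exp_le_exp, neg_div]
    exact neg_le_neg hB
  · positivity
  · positivity

lemma heatSG_smul_dirac (N : ℕ) (t : ℝ) (κ : ℝ) (x : RN N) :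
    heatSG N t (ENNReal.ofReal κ • Measure.dirac (0 : RN N)) x
      = ENNReal.ofReal κ * ENNReal.ofReal (heatKernel N t x) := by
  unfold heatSG
  rw [lintegral_smul_measure, lintegral_dirac' _ (measurable_ofReal_heatKernel N t x), sub_zero, smul_eq_mul]

lemma C0_pos {h : ℝ → ℝ} (hmeas : Measurable h) (hpos : ∀ θ ∈ Ioi (0:ℝ), 0 < h θ) :
    0 < ∫⁻ θ in Ioo (1:ℝ) 2, ENNReal.ofReal (h θ) := by
  refine (show (0:ℝ≥0∞) ≤ _ from zero_le).lt_of_ne fun heq => ?_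
  have h1 : ∀ᵐ θ ∂((volume : Measure ℝ).restrict (Ioo (1:ℝ) 2)),
      ENNReal.ofReal (h θ) = 0 :=
    (lintegral_eq_zero_iff hmeas.ennreal_ofReal).1 heq.symm
  have h2 : ∀ᵐ θ ∂(volume : Measure ℝ), θ ∈ Ioo (1:ℝ) 2 → ENNReal.ofReal (h θ) = 0 :=
    (ae_restrict_iff' measurableSet_Ioo).1 h1
  rw [ae_iff] at h2
  have hsub : Ioo (1:ℝ) 2 ⊆ {θ | ¬ (θ ∈ Ioo (1:ℝ) 2 → ENNReal.ofReal (h θ) = 0)} := by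
    intro θ hθ hP
    have hθpos : θ ∈ Ioi (0:ℝ) := lt_trans one_pos hθ.1
    have h3 := hP hθ
    rw [ENNReal.ofReal_eq_zero] at h3
    exact absurd h3 (not_le.2 (hpos θ hθpos))
  have h4 := measure_mono (μ := (volume : Measure ℝ)) hsub
  rw [h2] at h4
  simp [Real.volume_Ioo] at h4

lemma C0_le_one {h : ℝ → ℝ} (hpos : ∀ θ ∈ Ioi (0:ℝ), 0 < h θ)
    (hint : Integrable h ((volume : Measure ℝ).restrict (Ioi 0)))
    (hone : ∫ θ in Ioi (0:ℝ), h θ = 1) :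
    ∫⁻ θ in Ioo (1:ℝ) 2, ENNReal.ofReal (h θ) ≤ 1 := by
  have hsub : Ioo (1:ℝ) 2 ⊆ Ioi (0:ℝ) := fun θ hθ => lt_trans one_pos hθ.1
  have hae : 0 ≤ᵐ[(volume : Measure ℝ).restrict (Ioi 0)] h :=
    (ae_restrict_iff' measurableSet_Ioi).2 (Filter.Eventually.of_forall fun θ hθ => (hpos θ hθ).le)
  calc ∫⁻ θ in Ioo (1:ℝ) 2, ENNReal.ofReal (h θ)
      ≤ ∫⁻ θ in Ioi (0:ℝ), ENNReal.ofReal (h θ) := lintegral_mono_set hsub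
    _ = ENNReal.ofReal (∫ θ in Ioi (0:ℝ), h θ) :=
        (ofReal_integral_eq_lintegral_ofReal hint hae).symm
    _ = 1 := by rw [hone, ENNReal.ofReal_one]

lemma Pop_dirac_lower {N : ℕ} {α : ℝ} {h : ℝ → ℝ} (hmeas : Measurable h)
    {κ t : ℝ} (hκ : 0 ≤ κ) (ht : 0 < t) (hα : 0 < α)
    {x : RN N} (hx : ‖x‖ ≤ t ^ (α/2)) :
    ENNReal.ofReal κ * (∫⁻ θ in Ioo (1:ℝ) 2, ENNReal.ofReal (h θ))
        * ENNReal.ofReal ((8*π*t^α) ^ (-(N:ℝ)/2) * Real.exp (-4⁻¹))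
      ≤ Pop N α h t (ENNReal.ofReal κ • Measure.dirac (0 : RN N)) x := by
  have hb : 0 < t ^ α := Real.rpow_pos_of_pos ht α
  have hx2 : ‖x‖ ^ 2 ≤ t ^ α := by
    calc ‖x‖ ^ 2 ≤ (t ^ (α/2)) ^ 2 := by
          exact pow_le_pow_left₀ (norm_nonneg x) hx 2
      _ = t ^ α := by
          rw [← Real.rpow_natCast (t ^ (α/2)) 2, ← Real.rpow_mul ht.le]
          norm_num
  have key : ∀ θ ∈ Ioo (1:ℝ) 2,
      ENNReal.ofReal κ * ENNReal.ofReal ((8*π*t^α) ^ (-(N:ℝ)/2) * Real.exp (-4⁻¹))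
        ≤ heatSG N (t ^ α * θ) (ENNReal.ofReal κ • Measure.dirac (0 : RN N)) x := by
    intro θ hθ
    rw [heatSG_smul_dirac]
    refine mul_le_mul' le_rfl (ENNReal.ofReal_le_ofReal ?_)
    refine heatKernel_ge N x (by nlinarith [hθ.1]) ?_ ?_
    · nlinarith [mul_pos Real.pi_pos hb, hθ.2]
    · rw [div_le_iff₀ (by nlinarith [hθ.1])]
      nlinarith [hθ.1, hx2, hb]
  have hsub : Ioo (1:ℝ) 2 ⊆ Ioi (0:ℝ) := fun θ hθ => lt_trans one_pos hθ.1
  calc ENNReal.ofReal κ * (∫⁻ θ in Ioo (1:ℝ) 2, ENNReal.ofReal (h θ))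
        * ENNReal.ofReal ((8*π*t^α) ^ (-(N:ℝ)/2) * Real.exp (-4⁻¹))
      = ∫⁻ θ in Ioo (1:ℝ) 2, ENNReal.ofReal (h θ)
          * (ENNReal.ofReal κ * ENNReal.ofReal ((8*π*t^α) ^ (-(N:ℝ)/2) * Real.exp (-4⁻¹))) := by
        rw [lintegral_mul_const _ hmeas.ennreal_ofReal]; ring
    _ ≤ ∫⁻ θ in Ioo (1:ℝ) 2, ENNReal.ofReal (h θ)
          * heatSG N (t ^ α * θ) (ENNReal.ofReal κ • Measure.dirac (0 : RN N)) x := by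
        refine lintegral_mono_ae ?_
        filter_upwards [ae_restrict_mem measurableSet_Ioo] with θ hθ
        exact mul_le_mul' le_rfl (key θ hθ)
    _ ≤ Pop N α h t (ENNReal.ofReal κ • Measure.dirac (0 : RN N)) x := lintegral_mono_set hsub

lemma sq_rpow_half {t α : ℝ} (ht : 0 < t) : (t ^ (α/2)) ^ 2 = t ^ α := by
  rw [← Real.rpow_natCast (t ^ (α/2)) 2, ← Real.rpow_mul ht.le]
  norm_num

lemma duhamel_lower {N : ℕ} (hN : 1 ≤ N) {α p : ℝ} {h : ℝ → ℝ} (hmeas : Measurable h)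
    (hpos : ∀ θ ∈ Ioi (0:ℝ), 0 < h θ) (hα0 : 0 < α) (hα1 : α < 1) (hp1 : 1 < p)
    {c₀ vN : ℝ} (hc₀pos : 0 < c₀)
    (hc₀ : ENNReal.ofReal c₀ ≤ ∫⁻ θ in Ioo (1:ℝ) 2, ENNReal.ofReal (h θ))
    (hvNpos : 0 < vN) (hvN : ENNReal.ofReal vN ≤ volume (ball (0 : RN N) 1))
    {u : ℝ → RN N → ℝ≥0∞} {t ck ak : ℝ}
    (ht : 0 < t) (hck : 0 < ck) (hak : 0 ≤ ak)
    (hGk : ∀ᵐ s ∂((volume : Measure ℝ).restrict (Ioo (t/4) (t/2))),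
        ∀ᵐ y ∂(volume : Measure (RN N)), y ∈ ball (0 : RN N) (s ^ (α/2)) →
          ENNReal.ofReal (ck * s ^ (-ak)) ≤ u s y)
    {x : RN N} (hx : x ∈ ball (0 : RN N) (t ^ (α/2))) :
    ENNReal.ofReal ((α * c₀ * ((16*π) ^ (-(N:ℝ)/2) * Real.exp (-2))
          * (4 ^ (-(α*(N:ℝ)/2)) * vN) / 4) * ck ^ p * t ^ (α - ak * p))
      ≤ ENNReal.ofReal α * ∫⁻ s in Ioo (0 : ℝ) t,
          ENNReal.ofReal ((t - s) ^ (α - 1)) * Sop N α h (t - s) (fun y => u s y ^ p) x := by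
  haveI : Nonempty (Fin N) := Fin.pos_iff_nonempty.1 hN
  have hb : 0 < t ^ α := Real.rpow_pos_of_pos ht α
  have hxn : ‖x‖ < t ^ (α/2) := by rwa [mem_ball_zero_iff] at hx
  -- the pointwise (in s) lower bound for the integrand
  set M : ℝ := (16*π*t^α) ^ (-(N:ℝ)/2) * Real.exp (-2) * (ck ^ p * t ^ (-(ak*p)))
      * ((t/4) ^ (α*(N:ℝ)/2) * vN) with hM
  have hMpos : 0 < M := by
    have : (0:ℝ) < 16*π*t^α := by positivity
    positivity
  have key : ∀ s ∈ Ioo (t/4) (t/2),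
      (∀ᵐ y ∂(volume : Measure (RN N)), y ∈ ball (0 : RN N) (s ^ (α/2)) →
          ENNReal.ofReal (ck * s ^ (-ak)) ≤ u s y) →
      ENNReal.ofReal (t ^ (α-1) * (c₀ * M))
        ≤ ENNReal.ofReal ((t - s) ^ (α - 1)) * Sop N α h (t - s) (fun y => u s y ^ p) x := by
    intro s hs hy
    have hs0 : 0 < s := lt_trans (by linarith) hs.1
    have hst : s < t := lt_trans hs.2 (by linarith)
    have hts : 0 < t - s := by linarith
    -- kernel lower bound
    have kernel_bd : ∀ θ ∈ Ioo (1:ℝ) 2, ∀ y ∈ ball (0 : RN N) (s ^ (α/2)),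
        (16*π*t^α) ^ (-(N:ℝ)/2) * Real.exp (-2)
          ≤ heatKernel N ((t-s) ^ α * θ) (x - y) := by
      intro θ hθ y hy'
      have hτpos : 0 < (t-s) ^ α * θ := by
        have := Real.rpow_pos_of_pos hts α; nlinarith [hθ.1]
      refine heatKernel_ge N (x - y) hτpos ?_ ?_
      · have h1 : (t-s) ^ α ≤ t ^ α := Real.rpow_le_rpow hts.le (by linarith) hα0.le
        have h2 : (t-s) ^ α * θ ≤ t ^ α * 2 :=
          mul_le_mul h1 hθ.2.le (by linarith [hθ.1]) hb.le
        nlinarith [mul_nonneg Real.pi_pos.le (sub_nonneg.2 h2), Real.pi_pos, hb]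
      · have hyn : ‖y‖ < s ^ (α/2) := by rwa [mem_ball_zero_iff] at hy'
        have hst2 : s ^ (α/2) ≤ t ^ (α/2) := Real.rpow_le_rpow hs0.le hst.le (by linarith)
        have hxy : ‖x - y‖ ≤ 2 * t ^ (α/2) := by
          calc ‖x - y‖ ≤ ‖x‖ + ‖y‖ := norm_sub_le x y
            _ ≤ 2 * t ^ (α/2) := by nlinarith
        have hxy2 : ‖x - y‖ ^ 2 ≤ 4 * t ^ α := by
          calc ‖x - y‖ ^ 2 ≤ (2 * t ^ (α/2)) ^ 2 :=
                pow_le_pow_left₀ (norm_nonneg _) hxy 2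
            _ = 4 * t ^ α := by rw [mul_pow, sq_rpow_half ht]; ring
        have hτlb : t ^ α / 2 ≤ (t-s) ^ α * θ := by
          have l1 : (t/2) ^ α ≤ (t-s) ^ α :=
            Real.rpow_le_rpow (by linarith) (by linarith [hs.2]) hα0.le
          have l2 : (t/2) ^ α = t ^ α / 2 ^ α := Real.div_rpow ht.le (by norm_num) α
          have l3 : (2:ℝ) ^ α ≤ 2 := by
            calc (2:ℝ) ^ α ≤ (2:ℝ) ^ (1:ℝ) :=
                  Real.rpow_le_rpow_of_exponent_le one_le_two hα1.le
              _ = 2 := Real.rpow_one 2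
          have l4 : t ^ α / 2 ≤ (t/2) ^ α := by
            rw [l2]
            apply div_le_div_of_nonneg_left hb.le (by positivity) l3
          have l5 : (t-s) ^ α ≤ (t-s) ^ α * θ := by
            nlinarith [Real.rpow_pos_of_pos hts α, hθ.1]
          linarith
        rw [div_le_iff₀ (by linarith)]
        nlinarith
    -- pointwise (in y) lower bound for u s y ^ p
    have ubound : ∀ᵐ y ∂((volume : Measure (RN N)).restrict (ball (0:RN N) (s ^ (α/2)))),
        ENNReal.ofReal (ck ^ p * t ^ (-(ak*p))) ≤ u s y ^ p := by
      filter_upwards [ae_restrict_mem measurableSet_ball, ae_restrict_of_ae hy] with y hy1 hy2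
      have h1 : ENNReal.ofReal (ck * s ^ (-ak)) ^ p ≤ u s y ^ p :=
        ENNReal.rpow_le_rpow (hy2 hy1) (by linarith)
      have hcs : 0 < ck * s ^ (-ak) := by positivity
      rw [ENNReal.ofReal_rpow_of_pos hcs] at h1
      refine le_trans (ENNReal.ofReal_le_ofReal ?_) h1
      rw [Real.mul_rpow hck.le (Real.rpow_pos_of_pos hs0 _).le, ← Real.rpow_mul hs0.le,
        neg_mul]
      have : t ^ (-(ak*p)) ≤ s ^ (-(ak*p)) :=
        Real.rpow_le_rpow_of_nonpos hs0 hst.le (by nlinarith)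
      nlinarith [Real.rpow_pos_of_pos hck p, this]
    -- volume of the ball
    have hvol : ENNReal.ofReal ((t/4) ^ (α*(N:ℝ)/2) * vN)
        ≤ volume (ball (0 : RN N) (s ^ (α/2))) := by
      have hr : (0:ℝ) ≤ s ^ (α/2) := (Real.rpow_pos_of_pos hs0 _).le
      rw [Measure.addHaar_ball volume (0 : RN N) hr, finrank_euclideanSpace_fin]
      have hrN : (t/4) ^ (α*(N:ℝ)/2) ≤ (s ^ (α/2)) ^ N := by
        rw [← Real.rpow_natCast (s ^ (α/2)) N, ← Real.rpow_mul hs0.le]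
        calc (t/4) ^ (α*(N:ℝ)/2) ≤ s ^ (α*(N:ℝ)/2) :=
              Real.rpow_le_rpow (by linarith) hs.1.le (by positivity)
          _ = s ^ (α/2*(N:ℝ)) := by ring_nf
      calc ENNReal.ofReal ((t/4) ^ (α*(N:ℝ)/2) * vN)
          = ENNReal.ofReal ((t/4) ^ (α*(N:ℝ)/2)) * ENNReal.ofReal vN := by
            rw [ENNReal.ofReal_mul (by positivity)]
        _ ≤ ENNReal.ofReal ((s ^ (α/2)) ^ N) * volume (ball (0 : RN N) 1) :=
            mul_le_mul' (ENNReal.ofReal_le_ofReal hrN) hvN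
    -- the inner y-integral
    have hI : ∀ θ ∈ Ioo (1:ℝ) 2,
        ENNReal.ofReal M
          ≤ ∫⁻ y, ENNReal.ofReal (heatKernel N ((t-s) ^ α * θ) (x - y)) * u s y ^ p := by
      intro θ hθ
      calc ENNReal.ofReal M
          = ENNReal.ofReal ((16*π*t^α) ^ (-(N:ℝ)/2) * Real.exp (-2))
              * ENNReal.ofReal (ck ^ p * t ^ (-(ak*p)))
              * ENNReal.ofReal ((t/4) ^ (α*(N:ℝ)/2) * vN) := by
            rw [hM, ENNReal.ofReal_mul (by positivity), ENNReal.ofReal_mul (by positivity)]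
        _ ≤ ENNReal.ofReal ((16*π*t^α) ^ (-(N:ℝ)/2) * Real.exp (-2))
              * ENNReal.ofReal (ck ^ p * t ^ (-(ak*p)))
              * volume (ball (0 : RN N) (s ^ (α/2))) := mul_le_mul' le_rfl hvol
        _ = ∫⁻ _ in ball (0 : RN N) (s ^ (α/2)),
              ENNReal.ofReal ((16*π*t^α) ^ (-(N:ℝ)/2) * Real.exp (-2))
                * ENNReal.ofReal (ck ^ p * t ^ (-(ak*p))) := by
            rw [setLIntegral_const]
        _ ≤ ∫⁻ y in ball (0 : RN N) (s ^ (α/2)),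
              ENNReal.ofReal (heatKernel N ((t-s) ^ α * θ) (x - y)) * u s y ^ p := by
            refine lintegral_mono_ae ?_
            filter_upwards [ae_restrict_mem measurableSet_ball, ubound] with y hy1 hy2
            exact mul_le_mul' (ENNReal.ofReal_le_ofReal (kernel_bd θ hθ y hy1)) hy2
        _ ≤ ∫⁻ y, ENNReal.ofReal (heatKernel N ((t-s) ^ α * θ) (x - y)) * u s y ^ p :=
            setLIntegral_le_lintegral _ _
    -- the Sop lower bound
    have hSop : ENNReal.ofReal (c₀ * M) ≤ Sop N α h (t-s) (fun y => u s y ^ p) x := by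
      have hsub12 : Ioo (1:ℝ) 2 ⊆ Ioi (0:ℝ) := fun θ hθ => lt_trans one_pos hθ.1
      calc ENNReal.ofReal (c₀ * M)
          = ENNReal.ofReal c₀ * ENNReal.ofReal M := ENNReal.ofReal_mul hc₀pos.le
        _ ≤ (∫⁻ θ in Ioo (1:ℝ) 2, ENNReal.ofReal (h θ)) * ENNReal.ofReal M :=
            mul_le_mul' hc₀ le_rfl
        _ = ∫⁻ θ in Ioo (1:ℝ) 2, ENNReal.ofReal (h θ) * ENNReal.ofReal M :=
            (lintegral_mul_const _ hmeas.ennreal_ofReal).symm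
        _ ≤ ∫⁻ θ in Ioo (1:ℝ) 2, ENNReal.ofReal (θ * h θ) *
              ∫⁻ y, ENNReal.ofReal (heatKernel N ((t-s) ^ α * θ) (x - y)) * u s y ^ p := by
            refine lintegral_mono_ae ?_
            filter_upwards [ae_restrict_mem measurableSet_Ioo] with θ hθ
            refine mul_le_mul' (ENNReal.ofReal_le_ofReal ?_) (hI θ hθ)
            nlinarith [(hpos θ (hsub12 hθ)).le, hθ.1]
        _ ≤ Sop N α h (t-s) (fun y => u s y ^ p) x := lintegral_mono_set hsub12
    -- combine
    calc ENNReal.ofReal (t ^ (α-1) * (c₀ * M))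
        = ENNReal.ofReal (t ^ (α-1)) * ENNReal.ofReal (c₀ * M) := by
          rw [ENNReal.ofReal_mul (Real.rpow_pos_of_pos ht _).le]
      _ ≤ ENNReal.ofReal ((t - s) ^ (α - 1)) * Sop N α h (t - s) (fun y => u s y ^ p) x := by
          refine mul_le_mul' (ENNReal.ofReal_le_ofReal ?_) hSop
          exact Real.rpow_le_rpow_of_nonpos hts (by linarith) (by linarith)
  -- integrate over s ∈ (t/4, t/2)
  have hsub : Ioo (t/4) (t/2) ⊆ Ioo (0:ℝ) t := by
    intro s hs; exact ⟨lt_trans (by linarith) hs.1, lt_trans hs.2 (by linarith)⟩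
  have hint : ENNReal.ofReal (t ^ (α-1) * (c₀ * M)) * ENNReal.ofReal (t/4)
      ≤ ∫⁻ s in Ioo (0:ℝ) t,
          ENNReal.ofReal ((t - s) ^ (α - 1)) * Sop N α h (t - s) (fun y => u s y ^ p) x := by
    calc ENNReal.ofReal (t ^ (α-1) * (c₀ * M)) * ENNReal.ofReal (t/4)
        = ∫⁻ _ in Ioo (t/4) (t/2), ENNReal.ofReal (t ^ (α-1) * (c₀ * M)) := by
          rw [setLIntegral_const, Real.volume_Ioo, show t/2 - t/4 = t/4 by ring]
      _ ≤ ∫⁻ s in Ioo (t/4) (t/2),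
            ENNReal.ofReal ((t - s) ^ (α - 1)) * Sop N α h (t - s) (fun y => u s y ^ p) x := by
          refine lintegral_mono_ae ?_
          filter_upwards [ae_restrict_mem measurableSet_Ioo, hGk] with s hs1 hs2
          exact key s hs1 hs2
      _ ≤ _ := lintegral_mono_set hsub
  -- final arithmetic
  refine le_trans (ENNReal.ofReal_le_ofReal (le_of_eq ?_))
    (le_trans (ENNReal.ofReal_le_ofReal le_rfl)
      (by
        calc ENNReal.ofReal (α * (t ^ (α-1) * (c₀ * M) * (t/4)))
            = ENNReal.ofReal α * (ENNReal.ofReal (t ^ (α-1) * (c₀ * M)) * ENNReal.ofReal (t/4)) := by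
              rw [ENNReal.ofReal_mul hα0.le, ENNReal.ofReal_mul (by positivity)]
          _ ≤ _ := mul_le_mul' le_rfl hint))
  -- real-number identity
  rw [hM]
  have e1 : (16*π*t^α : ℝ) ^ (-(N:ℝ)/2) = (16*π) ^ (-(N:ℝ)/2) * t ^ (α*(-(N:ℝ)/2)) := by
    rw [Real.mul_rpow (by positivity) hb.le, ← Real.rpow_mul ht.le]
  have e2 : ((t/4:ℝ)) ^ (α*(N:ℝ)/2) = t ^ (α*(N:ℝ)/2) * 4 ^ (-(α*(N:ℝ)/2)) := by
    rw [Real.div_rpow ht.le (by norm_num), Real.rpow_neg (by norm_num), div_eq_mul_inv]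
  rw [e1, e2, show α - ak*p = (α-1) + α*(-(N:ℝ)/2) + α*((N:ℝ)/2) + (-(ak*p)) + 1 by ring,
    Real.rpow_add ht, Real.rpow_add ht, Real.rpow_add ht, Real.rpow_add ht, Real.rpow_one,
    show α*((N:ℝ)/2) = α*(N:ℝ)/2 by ring]
  ring

def aSeq (α p a0 : ℝ) : ℕ → ℝ
  | 0 => a0
  | k+1 => p * aSeq α p a0 k - α

def cSeq (p C c0 : ℝ) : ℕ → ℝ
  | 0 => c0
  | k+1 => C * cSeq p C c0 k ^ p

lemma growth_seq {α p a0 C c0 t : ℝ} (hα0 : 0 < α) (hp1 : 1 < p) (hC : 0 < C)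
    (hc0 : 0 < c0) (ht : 0 < t)
    (hD : 2 ≤ C * t ^ α * (c0 * t ^ (-a0)) ^ (p - 1)) :
    ∀ k : ℕ, 2 ^ k * (c0 * t ^ (-a0)) ≤ cSeq p C c0 k * t ^ (-(aSeq α p a0 k)) := by
  have hc : ∀ k, 0 < cSeq p C c0 k := by
    intro k; induction k with
    | zero => exact hc0
    | succ k ih => exact mul_pos hC (Real.rpow_pos_of_pos ih p)
  have hd : ∀ k, 0 < cSeq p C c0 k * t ^ (-(aSeq α p a0 k)) := fun k =>
    mul_pos (hc k) (Real.rpow_pos_of_pos ht _)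
  have hstep : ∀ k, cSeq p C c0 (k+1) * t ^ (-(aSeq α p a0 (k+1)))
      = (C * t ^ α) * (cSeq p C c0 k * t ^ (-(aSeq α p a0 k))) ^ p := by
    intro k
    show C * cSeq p C c0 k ^ p * t ^ (-(p * aSeq α p a0 k - α)) = _
    rw [Real.mul_rpow (hc k).le (Real.rpow_pos_of_pos ht _).le,
      ← Real.rpow_mul ht.le,
      show -(p * aSeq α p a0 k - α) = α + -aSeq α p a0 k * p by ring,
      Real.rpow_add ht]
    ring
  intro k
  induction k with
  | zero => simp [cSeq, aSeq]
  | succ k ih =>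
    have h1 : (1:ℝ) ≤ 2 ^ k := one_le_pow₀ one_le_two
    have hd0 : 0 < c0 * t ^ (-a0) := mul_pos hc0 (Real.rpow_pos_of_pos ht _)
    have hdk : c0 * t ^ (-a0) ≤ cSeq p C c0 k * t ^ (-(aSeq α p a0 k)) := by nlinarith
    have h2 : (c0 * t ^ (-a0)) ^ (p-1) ≤ (cSeq p C c0 k * t ^ (-(aSeq α p a0 k))) ^ (p-1) :=
      Real.rpow_le_rpow hd0.le hdk (by linarith)
    have h3 : 2 ≤ C * t ^ α * (cSeq p C c0 k * t ^ (-(aSeq α p a0 k))) ^ (p-1) := by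
      refine le_trans hD (mul_le_mul_of_nonneg_left h2 (by positivity))
    rw [hstep k]
    set d := cSeq p C c0 k * t ^ (-aSeq α p a0 k) with hdd
    have hdpos : 0 < d := hd k
    have hsplit : d ^ p = d ^ (p-1) * d := by
      have hh := Real.rpow_add hdpos (p-1) 1
      rw [Real.rpow_one, sub_add_cancel] at hh
      exact hh
    rw [hsplit]
    calc (2:ℝ) ^ (k+1) * (c0 * t ^ (-a0)) = 2 * (2 ^ k * (c0 * t ^ (-a0))) := by ring
      _ ≤ 2 * d := by linarith
      _ ≤ (C * t ^ α * d ^ (p-1)) * d := mul_le_mul_of_nonneg_right h3 hdpos.le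
      _ = C * t ^ α * (d ^ (p-1) * d) := by ring

/-- Corollary 5.1 (iii): for `p > p_F` the problem with initial data
`κδ₀` possesses no nonnegative local-in-time solutions, for any `κ > 0`. -/
theorem dirac_supercritical_nonexistence
    (N : ℕ) (hN : 1 ≤ N) (α p : ℝ) (hα : α ∈ Ioo (0 : ℝ) 1)
    (hp : 1 + 2 / (N : ℝ) < p) :
    ∀ h : ℝ → ℝ, IsAdmissibleDensity α h →
    ∀ κ : ℝ, 0 < κ → ∀ T : ℝ, 0 < T →
    ∀ u : ℝ → RN N → ℝ≥0∞,
      ¬ IsSolution N α p h (ENNReal.ofReal κ • Measure.dirac (0 : RN N)) T u := by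
  intro h hadm κ hκ T hT u hsol
  obtain ⟨humeas, heq⟩ := hsol
  have hα0 : 0 < α := hα.1
  have hα1 : α < 1 := hα.2
  have hNpos : (0:ℝ) < N := by exact_mod_cast hN
  have hp1 : 1 < p := by
    have : (0:ℝ) < 2/(N:ℝ) := by positivity
    linarith
  haveI : Nonempty (Fin N) := Fin.pos_iff_nonempty.1 hN
  set μ := ENNReal.ofReal κ • Measure.dirac (0 : RN N) with hμ
  have hone : ∫ θ in Ioi (0:ℝ), h θ = 1 := by
    have hm := hadm.moment 0 (by norm_num)
    simpa [Real.Gamma_one] using hm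
  have hint : Integrable h ((volume : Measure ℝ).restrict (Ioi 0)) := by
    by_contra hni
    rw [integral_undef hni] at hone
    norm_num at hone
  set C₀ := ∫⁻ θ in Ioo (1:ℝ) 2, ENNReal.ofReal (h θ) with hC₀
  have hC₀pos := C0_pos hadm.measurable hadm.pos
  have hC₀le := C0_le_one hadm.pos hint hone
  have hC₀top : C₀ ≠ ⊤ := ne_top_of_le_ne_top ENNReal.one_ne_top hC₀le
  set c₀ := C₀.toReal with hc₀def
  have hc₀pos : 0 < c₀ := ENNReal.toReal_pos hC₀pos.ne' hC₀top
  have hc₀ : ENNReal.ofReal c₀ ≤ C₀ := le_of_eq (ENNReal.ofReal_toReal hC₀top)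
  set vN := (volume (ball (0 : RN N) 1)).toReal with hvNdef
  have hballpos := measure_ball_pos (volume : Measure (RN N)) (0:RN N) one_pos
  have hballtop : volume (ball (0:RN N) 1) ≠ ⊤ := measure_ball_lt_top.ne
  have hvNpos : 0 < vN := ENNReal.toReal_pos hballpos.ne' hballtop
  have hvN : ENNReal.ofReal vN ≤ volume (ball (0:RN N) 1) :=
    le_of_eq (ENNReal.ofReal_toReal hballtop)
  set a0 : ℝ := α * N / 2 with ha0def
  set c0 : ℝ := κ * c₀ * ((8*π) ^ (-(N:ℝ)/2) * Real.exp (-4⁻¹)) with hc0def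
  set C : ℝ := α * c₀ * ((16*π) ^ (-(N:ℝ)/2) * Real.exp (-2)) * (4 ^ (-(α*(N:ℝ)/2)) * vN) / 4
    with hCdef
  have h8πpos : (0:ℝ) < (8*π) ^ (-(N:ℝ)/2) := Real.rpow_pos_of_pos (by positivity) _
  have h16πpos : (0:ℝ) < (16*π) ^ (-(N:ℝ)/2) := Real.rpow_pos_of_pos (by positivity) _
  have h4pos : (0:ℝ) < (4:ℝ) ^ (-(α*(N:ℝ)/2)) := Real.rpow_pos_of_pos (by norm_num) _
  have hc0pos : 0 < c0 := by rw [hc0def]; positivity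
  have hCpos : 0 < C := by rw [hCdef]; positivity
  have ha0pos : 0 < a0 := by rw [ha0def]; positivity
  have hcpos : ∀ k, 0 < cSeq p C c0 k := by
    intro k; induction k with
    | zero => exact hc0pos
    | succ k ih => exact mul_pos hCpos (Real.rpow_pos_of_pos ih p)
  have hkey : α < a0 * (p - 1) := by
    have h2 : 2/(N:ℝ) < p - 1 := by linarith
    have h3 : α * (N:ℝ)/2 * (2/(N:ℝ)) < a0 * (p-1) := by
      rw [ha0def]
      exact mul_lt_mul_of_pos_left h2 (by positivity)
    calc α = α * (N:ℝ)/2 * (2/(N:ℝ)) := by field_simp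
      _ < a0 * (p-1) := h3
  have hage : ∀ k, a0 ≤ aSeq α p a0 k := by
    intro k; induction k with
    | zero => simp [aSeq]
    | succ k ih =>
      show a0 ≤ p * aSeq α p a0 k - α
      nlinarith [hkey, ih, hp1, ha0pos]
  have hak : ∀ k, 0 ≤ aSeq α p a0 k := fun k => le_trans ha0pos.le (hage k)
  have hsubT : Ioo (0:ℝ) T ⊆ Ioc (0:ℝ) T := fun t ht' => ⟨ht'.1, ht'.2.le⟩
  have heq' : ∀ᵐ t ∂((volume:Measure ℝ).restrict (Ioo 0 T)),
      ∀ᵐ x ∂(volume : Measure (RN N)), u t x < ∞ ∧ u t x = Pop N α h t μ x +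
        ENNReal.ofReal α * ∫⁻ s in Ioo (0:ℝ) t,
          ENNReal.ofReal ((t-s)^(α-1)) * Sop N α h (t-s) (fun y => u s y ^ p) x :=
    ae_restrict_of_ae_restrict_of_subset hsubT heq
  have hQ : ∀ k, ∀ᵐ t ∂((volume:Measure ℝ).restrict (Ioo 0 T)),
      ∀ᵐ y ∂(volume : Measure (RN N)), y ∈ ball (0:RN N) (t ^ (α/2)) →
        ENNReal.ofReal (cSeq p C c0 k * t ^ (-(aSeq α p a0 k))) ≤ u t y := by
    intro k; induction k with
    | zero =>
      filter_upwards [heq', ae_restrict_mem measurableSet_Ioo] with t hteq htmem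
      filter_upwards [hteq] with y hy hyball
      have ht0 : 0 < t := htmem.1
      have hb : 0 < t ^ α := Real.rpow_pos_of_pos ht0 α
      have hyn : ‖y‖ ≤ t ^ (α/2) := (mem_ball_zero_iff.1 hyball).le
      have hlow := Pop_dirac_lower (N := N) hadm.measurable hκ.le ht0 hα0 hyn
      rw [hy.2]
      refine le_trans (le_trans ?_ hlow) le_self_add
      have hrw : cSeq p C c0 0 * t ^ (-(aSeq α p a0 0))
          = κ * c₀ * ((8*π*t^α) ^ (-(N:ℝ)/2) * Real.exp (-4⁻¹)) := by
        show c0 * t ^ (-a0) = _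
        rw [hc0def, Real.mul_rpow (by positivity) hb.le, ← Real.rpow_mul ht0.le,
          show α * (-(N:ℝ)/2) = -a0 by rw [ha0def]; ring]
        ring
      rw [hrw, ENNReal.ofReal_mul (by positivity), ENNReal.ofReal_mul hκ.le]
      exact mul_le_mul' (mul_le_mul' le_rfl hc₀) le_rfl
    | succ k ih =>
      filter_upwards [heq', ae_restrict_mem measurableSet_Ioo] with t hteq htmem
      have ht0 : 0 < t := htmem.1
      have hsub4 : Ioo (t/4) (t/2) ⊆ Ioo (0:ℝ) T := by
        intro s hs
        exact ⟨by linarith [hs.1], by linarith [hs.2, htmem.2]⟩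
      have hGk := ae_restrict_of_ae_restrict_of_subset hsub4 ih
      filter_upwards [hteq] with y hy hyball
      have hdl := duhamel_lower hN hadm.measurable hadm.pos hα0 hα1 hp1 hc₀pos hc₀
        hvNpos hvN ht0 (hcpos k) (hak k) hGk hyball
      rw [hy.2]
      refine le_trans (le_trans (ENNReal.ofReal_le_ofReal (le_of_eq ?_)) hdl) le_add_self
      show cSeq p C c0 (k+1) * t ^ (-(aSeq α p a0 (k+1))) = _
      show C * cSeq p C c0 k ^ p * t ^ (-(p*aSeq α p a0 k - α)) = _
      rw [show -(p*aSeq α p a0 k - α) = α - aSeq α p a0 k * p by ring]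
  set B := C * c0 ^ (p-1) with hB
  have hBpos : 0 < B := by
    have := Real.rpow_pos_of_pos hc0pos (p-1); rw [hB]; positivity
  set e := a0 * (p-1) - α with he
  have hepos : 0 < e := by rw [he]; linarith
  set τ₀ := (B/2) ^ (e⁻¹) with hτ₀
  have hτ₀pos : 0 < τ₀ := Real.rpow_pos_of_pos (by positivity) _
  set t₃ := min T τ₀ with ht₃
  have ht₃pos : 0 < t₃ := lt_min hT hτ₀pos
  have hsub3 : Ioo (0:ℝ) t₃ ⊆ Ioo (0:ℝ) T := fun t ht' =>
    ⟨ht'.1, lt_of_lt_of_le ht'.2 (min_le_left _ _)⟩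
  have hallae : ∀ᵐ t ∂((volume:Measure ℝ).restrict (Ioo 0 t₃)),
      ((∀ k, ∀ᵐ y ∂(volume : Measure (RN N)), y ∈ ball (0:RN N) (t ^ (α/2)) →
          ENNReal.ofReal (cSeq p C c0 k * t ^ (-(aSeq α p a0 k))) ≤ u t y) ∧
        (∀ᵐ x ∂(volume : Measure (RN N)), u t x < ∞ ∧ u t x = Pop N α h t μ x +
          ENNReal.ofReal α * ∫⁻ s in Ioo (0:ℝ) t,
            ENNReal.ofReal ((t-s)^(α-1)) * Sop N α h (t-s) (fun y => u s y ^ p) x)) ∧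
        t ∈ Ioo (0:ℝ) t₃ := by
    have h1 := (ae_all_iff.2 hQ).and heq'
    exact (ae_restrict_of_ae_restrict_of_subset hsub3 h1).and
      (ae_restrict_mem measurableSet_Ioo)
  have hne : (volume:Measure ℝ).restrict (Ioo 0 t₃) ≠ 0 := by
    have hv : volume (Ioo (0:ℝ) t₃) ≠ 0 := by
      rw [Real.volume_Ioo]
      simp only [ne_eq, ENNReal.ofReal_eq_zero, not_le]
      linarith
    exact fun h0 => hv (Measure.restrict_eq_zero.1 h0)
  haveI : (ae ((volume:Measure ℝ).restrict (Ioo 0 t₃))).NeBot := ae_neBot.2 hne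
  obtain ⟨t, ⟨⟨hQt, hteq⟩, htmem⟩⟩ := hallae.exists
  have ht0 : 0 < t := htmem.1
  have hd0pos : 0 < c0 * t ^ (-a0) :=
    mul_pos hc0pos (Real.rpow_pos_of_pos ht0 _)
  have hD : 2 ≤ C * t ^ α * (c0 * t ^ (-a0)) ^ (p-1) := by
    have heq1 : C * t ^ α * (c0 * t ^ (-a0)) ^ (p-1) = B * t ^ (-e) := by
      rw [Real.mul_rpow hc0pos.le (Real.rpow_pos_of_pos ht0 _).le,
        ← Real.rpow_mul ht0.le, hB, he,
        show -(a0*(p-1) - α) = α + -a0*(p-1) by ring, Real.rpow_add ht0]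
      ring
    rw [heq1]
    have htτ : t ≤ τ₀ := le_trans htmem.2.le (min_le_right _ _)
    have h5 : τ₀ ^ (-e) ≤ t ^ (-e) :=
      Real.rpow_le_rpow_of_nonpos ht0 htτ (by linarith)
    have h6 : τ₀ ^ (-e) = 2 / B := by
      rw [hτ₀, ← Real.rpow_mul (by positivity),
        show e⁻¹ * (-e) = -1 by field_simp, Real.rpow_neg_one, inv_div]
    calc (2:ℝ) = B * (2/B) := by field_simp
      _ = B * τ₀ ^ (-e) := by rw [h6]
      _ ≤ B * t ^ (-e) := mul_le_mul_of_nonneg_left h5 hBpos.le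
  have hgrow := growth_seq hα0 hp1 hCpos hc0pos ht0 hD
  have hballne : (volume : Measure (RN N)).restrict (ball (0:RN N) (t ^ (α/2))) ≠ 0 := by
    have hv : volume (ball (0:RN N) (t ^ (α/2))) ≠ 0 :=
      (measure_ball_pos volume _ (Real.rpow_pos_of_pos ht0 _)).ne'
    exact fun h0 => hv (Measure.restrict_eq_zero.1 h0)
  haveI : (ae ((volume : Measure (RN N)).restrict (ball (0:RN N) (t ^ (α/2))))).NeBot :=
    ae_neBot.2 hballne
  have hally : ∀ᵐ y ∂((volume : Measure (RN N)).restrict (ball (0:RN N) (t ^ (α/2)))),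
      (∀ k : ℕ, y ∈ ball (0:RN N) (t ^ (α/2)) →
          ENNReal.ofReal (cSeq p C c0 k * t ^ (-(aSeq α p a0 k))) ≤ u t y) ∧
        (u t y < ∞ ∧ u t y = Pop N α h t μ y +
          ENNReal.ofReal α * ∫⁻ s in Ioo (0:ℝ) t,
            ENNReal.ofReal ((t-s)^(α-1)) * Sop N α h (t-s) (fun z => u s z ^ p) y) ∧
        y ∈ ball (0:RN N) (t ^ (α/2)) :=
    (ae_restrict_of_ae (ae_all_iff.2 hQt)).and
      ((ae_restrict_of_ae hteq).and (ae_restrict_mem measurableSet_ball))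
  obtain ⟨y, hy1, ⟨hyfin, _⟩, hymem⟩ := hally.exists
  set r := (u t y).toReal with hrdef
  have hur : u t y = ENNReal.ofReal r := (ENNReal.ofReal_toReal hyfin.ne).symm
  have hbd : ∀ k : ℕ, 2 ^ k * (c0 * t ^ (-a0)) ≤ r := by
    intro k
    have h7 := hy1 k hymem
    rw [hur] at h7
    have h8 := (ENNReal.ofReal_le_ofReal_iff ENNReal.toReal_nonneg).1 h7
    linarith [hgrow k]
  obtain ⟨k, hk⟩ := pow_unbounded_of_one_lt (r / (c0 * t ^ (-a0))) one_lt_two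
  rw [div_lt_iff₀ hd0pos] at hk
  linarith [hbd k]
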